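/- arXiv:1805.01311 — 6 statements merged into one kernel-verified Lean document; each statement's English description precedes it below -/
import Mathlib

section
/- Let G be an HRLQ instance, and suppose M1 is a matching of G that is stable in the instance G1 and satisfies |M1(h)| = q⁻(h) for every hospital h. Let M2 be a stable matching of the instance G' defined from M1. Then M = M1 ∪ M2 is a feasible matching of G that is maximal envy-free in G. -/
open scoped Classical

/-- An HRLQ instance on residents `R` and hospitals `H`: an edge set (acceptability
relation), strict preference relations of residents over hospitals and of hospitals
over residents (strict, transitive, total over neighbors), and lower/upper quotas. -/
structure HRLQ (R H : Type) where
  E : Finset (R × H)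
  /-- `rp r h h'` : resident `r` strictly prefers hospital `h` over `h'`. -/
  rp : R → H → H → Prop
  /-- `hp h r r'` : hospital `h` strictly prefers resident `r` over `r'`. -/
  hp : H → R → R → Prop
  lq : H → ℕ
  uq : H → ℕ
  lq_le_uq : ∀ h, lq h ≤ uq h
  uq_pos : ∀ h, 1 ≤ uq h
  rp_irrefl : ∀ r h, ¬ rp r h h
  rp_trans : ∀ r h₁ h₂ h₃, rp r h₁ h₂ → rp r h₂ h₃ → rp r h₁ h₃
  rp_total : ∀ r h₁ h₂, (r, h₁) ∈ E → (r, h₂) ∈ E → h₁ ≠ h₂ → rp r h₁ h₂ ∨ rp r h₂ h₁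
  hp_irrefl : ∀ h r, ¬ hp h r r
  hp_trans : ∀ h r₁ r₂ r₃, hp h r₁ r₂ → hp h r₂ r₃ → hp h r₁ r₃
  hp_total : ∀ h r₁ r₂, (r₁, h) ∈ E → (r₂, h) ∈ E → r₁ ≠ r₂ → hp h r₁ r₂ ∨ hp h r₂ r₁

namespace HRLQ

variable {R H : Type} [Fintype R] [Fintype H] [DecidableEq R] [DecidableEq H]

/-- `M(h)`: the set of residents assigned to hospital `h` by `M`.
A matching is represented as a function `M : R → Option H` assigning to each resident
at most one hospital (`none` = unmatched). -/
noncomputable def assigned (M : R → Option H) (h : H) : Finset R :=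
  Finset.univ.filter fun r => M r = some h

/-- `M` is a matching with respect to edge set `E` and upper quotas `q`:
every matched pair is an edge and no hospital exceeds its upper quota.
(Each resident is matched to at most one hospital by the functional representation.) -/
def IsMatchingIn (E : Finset (R × H)) (q : H → ℕ) (M : R → Option H) : Prop :=
  (∀ r h, M r = some h → (r, h) ∈ E) ∧ ∀ h, (assigned M h).card ≤ q h

/-- `M` is a matching of the instance `G`. -/
def IsMatching (G : HRLQ R H) (M : R → Option H) : Prop :=
  IsMatchingIn G.E G.uq M

/-- `M` is a feasible matching of `G`: a matching meeting all lower quotas. -/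
def Feasible (G : HRLQ R H) (M : R → Option H) : Prop :=
  IsMatching G M ∧ ∀ h, G.lq h ≤ (assigned M h).card

/-- Resident `r` is unmatched in `M` or prefers `h` over `M(r)`. -/
def WantsMore (G : HRLQ R H) (M : R → Option H) (r : R) (h : H) : Prop :=
  ∀ h', M r = some h' → G.rp r h h'

/-- The pair `(r,h)` blocks `M`, with respect to edge set `E` and upper quotas `q`. -/
def BlocksIn (G : HRLQ R H) (E : Finset (R × H)) (q : H → ℕ)
    (M : R → Option H) (r : R) (h : H) : Prop :=
  (r, h) ∈ E ∧ M r ≠ some h ∧ WantsMore G M r h ∧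
    ((assigned M h).card < q h ∨ ∃ r' ∈ assigned M h, G.hp h r r')

/-- The pair `(r,h)` blocks `M` in the instance `G`. -/
def Blocks (G : HRLQ R H) (M : R → Option H) (r : R) (h : H) : Prop :=
  BlocksIn G G.E G.uq M r h

/-- `M` is stable in `G`: no blocking pair. -/
def Stable (G : HRLQ R H) (M : R → Option H) : Prop :=
  ∀ r h, ¬ Blocks G M r h

/-- Resident `r` has justified envy toward `r'` (matched to some hospital `h`) w.r.t. `M`. -/
def JustifiedEnvy (G : HRLQ R H) (M : R → Option H) (r r' : R) : Prop :=
  ∃ h, M r' = some h ∧ (r, h) ∈ G.E ∧ G.hp h r r' ∧ WantsMore G M r h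

/-- `M` is envy-free: no resident has justified envy toward another. -/
def EnvyFree (G : HRLQ R H) (M : R → Option H) : Prop :=
  ∀ r r', ¬ JustifiedEnvy G M r r'

/-- `M` is a maximal envy-free matching of `G`: it is envy-free, and for every edge
`(r,h) ∈ E \ M`, `M ∪ {(r,h)}` is not an envy-free matching (either it is not a valid
matching, or it is not envy-free). -/
def MaximalEnvyFree (G : HRLQ R H) (M : R → Option H) : Prop :=
  EnvyFree G M ∧ ∀ r h, (r, h) ∈ G.E → M r ≠ some h →
    ¬ (M r = none ∧ IsMatching G (Function.update M r (some h)) ∧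
        EnvyFree G (Function.update M r (some h)))

/-- `r'` is a candidate threshold resident for `h` w.r.t. `M1`: a neighbor of `h`
that is matched in `M1` and prefers `h` over its `M1`-partner. -/
def ThresholdCand (G : HRLQ R H) (M1 : R → Option H) (h : H) (r' : R) : Prop :=
  (r', h) ∈ G.E ∧ ∃ h', M1 r' = some h' ∧ G.rp r' h h'

/-- `rho` is the threshold resident of `h` w.r.t. `M1` (`none` encodes the dummy
resident used when no candidate exists): the candidate most preferred by `h`. -/
def IsThreshold (G : HRLQ R H) (M1 : R → Option H) (h : H) : Option R → Prop
  | none => ∀ r', ¬ ThresholdCand G M1 h r'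
  | some rh => ThresholdCand G M1 h rh ∧
      ∀ r', ThresholdCand G M1 h r' → r' ≠ rh → G.hp h rh r'

/-- `h` prefers `r` over the threshold resident `rho` (`none` = dummy resident,
less preferred by `h` than any neighbor). -/
def PrefThreshold (G : HRLQ R H) (h : H) : Option R → R → Prop
  | none, _ => True
  | some rh, r => G.hp h r rh

/-- The edge set `E'` of the reduced instance `G'` built from `M1` and the threshold
residents `rho`: edges `(r,h) ∈ E` with `r` unmatched in `M1` (i.e. `r ∈ R'`),
`h` under-subscribed (i.e. `h ∈ H'`), and `h` preferring `r` over its threshold resident. -/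
noncomputable def Ered (G : HRLQ R H) (M1 : R → Option H) (rho : H → Option R) :
    Finset (R × H) :=
  G.E.filter fun p =>
    M1 p.1 = none ∧ (assigned M1 p.2).card < G.uq p.2 ∧
      PrefThreshold G p.2 (rho p.2) p.1

/-- The upper quotas of the reduced instance `G'`. -/
def qred (G : HRLQ R H) : H → ℕ := fun h => G.uq h - G.lq h

/-- The union `M1 ∪ M2` of two matchings (with disjoint sets of matched residents). -/
def munion (M1 M2 : R → Option H) : R → Option H := fun r =>
  match M1 r with
  | some h => some h
  | none => M2 r

/-- The vote of resident `r` comparing assignment `a` (in `M`) with `b` (in `M'`):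
`1` if `r` prefers `a`, `-1` if `r` prefers `b`, `0` otherwise; being unmatched is
less preferred than being matched to any neighbor. -/
noncomputable def rvote (G : HRLQ R H) (r : R) (a b : Option H) : ℤ :=
  if a = b then 0
  else
    match a, b with
    | none, _ => -1
    | _, none => 1
    | some h, some h' => if G.rp r h h' then 1 else if G.rp r h' h then -1 else 0

/-- `P` encodes a legal correspondence `corr_h` for hospital `h` comparing `M` with `M'`:
a pairing of `M(h) \ M'(h)` with `M'(h) \ M(h)` (unpaired residents being paired with
distinct dummy residents after padding both sides to size `q⁺(h)`). -/
def IsCorr (G : HRLQ R H) (M M' : R → Option H) (h : H) (P : Finset (R × R)) : Prop :=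
  (∀ p ∈ P, p.1 ∈ assigned M h \ assigned M' h ∧ p.2 ∈ assigned M' h \ assigned M h) ∧
  (∀ p ∈ P, ∀ q ∈ P, (p.1 = q.1 ∨ p.2 = q.2) → p = q) ∧
  (assigned M h \ assigned M' h).card + (assigned M' h \ assigned M h).card - P.card
    ≤ G.uq h

/-- The total vote of hospital `h` comparing `M` with `M'` under the correspondence `P`
(positive contributions favor `M`): paired residents are compared by `h`'s preference;
a resident of `M(h) \ M'(h)` paired with a dummy contributes `+1`; a dummy paired with a
resident of `M'(h) \ M(h)` contributes `-1`; dummy-dummy pairs contribute `0`. -/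
noncomputable def hvote (G : HRLQ R H) (M M' : R → Option H) (h : H)
    (P : Finset (R × R)) : ℤ :=
  (∑ p ∈ P, if G.hp h p.1 p.2 then (1 : ℤ) else -1)
    + (((assigned M h \ assigned M' h).card - P.card : ℕ) : ℤ)
    - (((assigned M' h \ assigned M h).card - P.card : ℕ) : ℤ)

/-- The total vote of all residents and hospitals comparing `M` with `M'` under the
correspondences `P`; positive values favor `M`, negative values favor `M'`. -/
noncomputable def totalVote (G : HRLQ R H) (M M' : R → Option H)
    (P : H → Finset (R × R)) : ℤ :=
  (∑ r, rvote G r (M r) (M' r)) + ∑ h, hvote G M M' h (P h)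

/-- `M'` is more popular than `M` with respect to the chosen correspondences `P`. -/
def MorePopular (G : HRLQ R H) (M' M : R → Option H) (P : H → Finset (R × R)) : Prop :=
  totalVote G M M' P < 0

/-- `M` is a feasible matching popular amongst the set of feasible matchings: no feasible
matching `M'` is more popular than `M` under any choice of correspondences. -/
def PopularAmongFeasible (G : HRLQ R H) (M : R → Option H) : Prop :=
  Feasible G M ∧ ∀ M' P, Feasible G M' → (∀ h, IsCorr G M M' h (P h)) →
    ¬ MorePopular G M' M P

/-- `M` is a popular matching: no matching `M'` is more popular than `M` under any
choice of correspondences. -/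
def Popular (G : HRLQ R H) (M : R → Option H) : Prop :=
  IsMatching G M ∧ ∀ M' P, IsMatching G M' → (∀ h, IsCorr G M M' h (P h)) →
    ¬ MorePopular G M' M P

/-- The size of a matching: the number of matched residents. -/
noncomputable def msize (M : R → Option H) : ℕ :=
  (Finset.univ.filter fun r => M r ≠ none).card

/-- Resident `r` is matched in `M` to its rank-1 (most preferred) hospital. -/
def Rank1 (G : HRLQ R H) (M : R → Option H) (r : R) : Prop :=
  ∃ h, M r = some h ∧ ∀ h', (r, h') ∈ G.E → h' ≠ h → G.rp r h h'

/-- The number of residents matched to their rank-1 hospital in `M`. -/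
noncomputable def rank1Count (G : HRLQ R H) (M : R → Option H) : ℕ :=
  (Finset.univ.filter fun r => Rank1 G M r).card

/-- The number of residents who prefer their assignment in `M` over that in `M'`. -/
noncomputable def prefCount (G : HRLQ R H) (M M' : R → Option H) : ℕ :=
  (Finset.univ.filter fun r => rvote G r (M r) (M' r) = 1).card

end HRLQ

/-- If `M1` is a matching of `G` that is stable in `G1` and fills every
lower quota exactly, and `M2` is a stable matching of the reduced instance `G'` built
from `M1`, then `M = M1 ∪ M2` is a feasible matching of `G` that is maximal envy-free. -/
theorem statement0 {R H : Type} [Fintype R] [Fintype H] [DecidableEq R] [DecidableEq H]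
    (G : HRLQ R H) (M1 M2 : R → Option H) (rho : H → Option R)
    (hM1 : HRLQ.IsMatching G M1)
    (hM1stab : ∀ r h, ¬ HRLQ.BlocksIn G G.E G.lq M1 r h)
    (hM1full : ∀ h, (HRLQ.assigned M1 h).card = G.lq h)
    (hrho : ∀ h, (HRLQ.assigned M1 h).card < G.uq h → HRLQ.IsThreshold G M1 h (rho h))
    (hM2 : HRLQ.IsMatchingIn (HRLQ.Ered G M1 rho) (HRLQ.qred G) M2)
    (hM2stab : ∀ r h, ¬ HRLQ.BlocksIn G (HRLQ.Ered G M1 rho) (HRLQ.qred G) M2 r h) :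
    HRLQ.Feasible G (HRLQ.munion M1 M2) ∧ HRLQ.MaximalEnvyFree G (HRLQ.munion M1 M2) := by
  classical
  set M := HRLQ.munion M1 M2 with hMdef
  have hM2none : ∀ r h, M2 r = some h → M1 r = none := by
    intro r h hr
    have := hM2.1 r h hr
    simp [HRLQ.Ered, Finset.mem_filter] at this
    exact this.2.1
  have hM2E : ∀ r h, M2 r = some h → (r, h) ∈ G.E := by
    intro r h hr
    have := hM2.1 r h hr
    simp [HRLQ.Ered, Finset.mem_filter] at this
    exact this.1
  have hMcases : ∀ r h, M r = some h → M1 r = some h ∨ (M1 r = none ∧ M2 r = some h) := by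
    intro r h hr
    cases hm : M1 r with
    | some h' =>
      left
      rw [hMdef] at hr
      simp only [HRLQ.munion, hm] at hr
      exact hr
    | none =>
      right
      rw [hMdef] at hr
      simp only [HRLQ.munion, hm] at hr
      exact ⟨rfl, hr⟩
  have hM1sub : ∀ r h, M1 r = some h → M r = some h := by
    intro r h hr; simp [hMdef, HRLQ.munion, hr]
  have hM2sub : ∀ r h, M2 r = some h → M r = some h := by
    intro r h hr; simp [hMdef, HRLQ.munion, hM2none r h hr, hr]
  have hassigned : ∀ h, HRLQ.assigned M h = HRLQ.assigned M1 h ∪ HRLQ.assigned M2 h := by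
    intro h; ext r
    simp only [HRLQ.assigned, Finset.mem_filter, Finset.mem_univ, true_and, Finset.mem_union]
    constructor
    · intro hr
      rcases hMcases r h hr with h1 | ⟨_, h2⟩
      · exact Or.inl h1
      · exact Or.inr h2
    · rintro (h1 | h2)
      · exact hM1sub r h h1
      · exact hM2sub r h h2
  have hdisj : ∀ h, Disjoint (HRLQ.assigned M1 h) (HRLQ.assigned M2 h) := by
    intro h
    rw [Finset.disjoint_left]
    intro r h1 h2
    simp only [HRLQ.assigned, Finset.mem_filter, Finset.mem_univ, true_and] at h1 h2
    rw [hM2none r h h2] at h1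
    exact nomatch h1
  have hcard : ∀ h, (HRLQ.assigned M h).card = G.lq h + (HRLQ.assigned M2 h).card := by
    intro h
    rw [hassigned h, Finset.card_union_of_disjoint (hdisj h), hM1full h]
  have hfeas : HRLQ.Feasible G M := by
    refine ⟨⟨?_, ?_⟩, ?_⟩
    · intro r h hr
      rcases hMcases r h hr with h1 | ⟨_, h2⟩
      · exact hM1.1 r h h1
      · exact hM2E r h h2
    · intro h
      have h2 := hM2.2 h
      have hle := G.lq_le_uq h
      unfold HRLQ.qred at h2
      rw [hcard h]
      omega
    · intro h; rw [hcard h]; omega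
  have hEF : HRLQ.EnvyFree G M := by
    rintro r r' ⟨h, hr', hrE, hpr, hwm⟩
    rcases hMcases r' h hr' with h1 | ⟨h1n, h2⟩
    · apply hM1stab r h
      refine ⟨hrE, ?_, ?_, Or.inr ⟨r', ?_, hpr⟩⟩
      · intro hc
        exact G.rp_irrefl r h (hwm h (hM1sub r h hc))
      · intro h' hh'
        exact hwm h' (hM1sub r h' hh')
      · simp [HRLQ.assigned, h1]
    · have hred := hM2.1 r' h h2
      simp only [HRLQ.Ered, Finset.mem_filter] at hred
      obtain ⟨hr'E, hr'1, hcardlt, hpref⟩ := hred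
      have hth := hrho h hcardlt
      cases hm1r : M1 r with
      | some h₀ =>
        have hcand : HRLQ.ThresholdCand G M1 h r :=
          ⟨hrE, h₀, hm1r, hwm h₀ (hM1sub r h₀ hm1r)⟩
        cases hrh : rho h with
        | none =>
          rw [hrh] at hth
          exact hth r hcand
        | some rh =>
          rw [hrh] at hth
          obtain ⟨hrhcand, hrhmax⟩ := hth
          rw [hrh] at hpref
          have hpref' : G.hp h r' rh := hpref
          have hpr_rh : G.hp h r rh := G.hp_trans h r r' rh hpr hpref'
          by_cases hrr : r = rh
          · exact G.hp_irrefl h r (hrr ▸ hpr_rh)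
          · exact G.hp_irrefl h r (G.hp_trans h r rh r hpr_rh (hrhmax r hcand hrr))
      | none =>
        have hprefr : HRLQ.PrefThreshold G h (rho h) r := by
          cases hrh : rho h with
          | none => exact trivial
          | some rh =>
            rw [hrh] at hpref
            have hpref' : G.hp h r' rh := hpref
            exact G.hp_trans h r r' rh hpr hpref'
        apply hM2stab r h
        refine ⟨?_, ?_, ?_, Or.inr ⟨r', ?_, hpr⟩⟩
        · simp only [HRLQ.Ered, Finset.mem_filter]
          exact ⟨hrE, hm1r, hcardlt, hprefr⟩
        · intro hc
          exact G.rp_irrefl r h (hwm h (hM2sub r h hc))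
        · intro h' hh'
          exact hwm h' (hM2sub r h' hh')
        · simp [HRLQ.assigned, h2]
  refine ⟨hfeas, hEF, ?_⟩
  rintro r h hrE hMr ⟨hMrn, hM', hEF'⟩
  have hm1r : M1 r = none := by
    cases hm : M1 r with
    | none => rfl
    | some h' =>
      rw [hM1sub r h' hm] at hMrn
      exact nomatch hMrn
  have hm2r : M2 r = none := by
    cases hm : M2 r with
    | none => rfl
    | some h' =>
      rw [hM2sub r h' hm] at hMrn
      exact nomatch hMrn
  -- card of assigned in updated matching
  have hA' : HRLQ.assigned (Function.update M r (some h)) h = insert r (HRLQ.assigned M h) := by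
    ext r'
    simp only [HRLQ.assigned, Finset.mem_filter, Finset.mem_univ, true_and, Finset.mem_insert]
    by_cases hr' : r' = r
    · subst hr'
      simp [Function.update]
    · simp [Function.update, hr']
  have hrnot : r ∉ HRLQ.assigned M h := by
    simp [HRLQ.assigned, hMrn]
  have hcard' : (HRLQ.assigned M h).card + 1 ≤ G.uq h := by
    have := hM'.2 h
    rw [hA', Finset.card_insert_of_notMem hrnot] at this
    omega
  have hcardlt : (HRLQ.assigned M1 h).card < G.uq h := by
    rw [hM1full h]
    have := hcard h
    omega
  have hcap : (HRLQ.assigned M2 h).card < HRLQ.qred G h := by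
    have := hcard h
    unfold HRLQ.qred
    have hle := G.lq_le_uq h
    omega
  have hth := hrho h hcardlt
  have hprefr : HRLQ.PrefThreshold G h (rho h) r := by
    cases hrh : rho h with
    | none => exact trivial
    | some rh =>
      rw [hrh] at hth
      obtain ⟨⟨hrhE, h', hM1rh, hrprh⟩, _⟩ := hth
      have hrhne : rh ≠ r := by
        intro hc
        rw [hc, hm1r] at hM1rh
        exact nomatch hM1rh
      have hnrh : ¬ G.hp h rh r := by
        intro hc
        apply hEF' rh r
        refine ⟨h, ?_, hrhE, hc, ?_⟩
        · simp [Function.update]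
        · intro h'' hh''
          rw [Function.update_of_ne hrhne] at hh''
          rw [hM1sub rh h' hM1rh] at hh''
          cases hh''
          exact hrprh
      rcases G.hp_total h r rh hrE hrhE (fun hc => hrhne hc.symm) with hgood | hbad
      · exact hgood
      · exact absurd hbad hnrh
  apply hM2stab r h
  refine ⟨?_, ?_, ?_, Or.inl hcap⟩
  · simp only [HRLQ.Ered, Finset.mem_filter]
    exact ⟨hrE, hm1r, hcardlt, hprefr⟩
  · rw [hm2r]; exact fun hc => nomatch hc
  · intro h' hh'
    rw [hm2r] at hh'
    exact nomatch hh'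
end

section
/- Let G be an HRLQ instance, and suppose M1 is a matching of G that is stable in the instance G1 and satisfies |M1(h)| = q⁻(h) for every hospital h. Let M2 be a stable matching of the instance G' defined from M1. Then M = M1 ∪ M2 is a matching of G (every resident is matched to at most one hospital and |M(h)| ≤ q⁺(h) for every hospital h) and M is feasible (|M(h)| ≥ q⁻(h) for every hospital h). -/
open scoped Classical

/-- If `M1` is a matching of `G` that is stable in `G1` and fills every
lower quota exactly, and `M2` is a stable matching of the reduced instance `G'`, then
`M = M1 ∪ M2` is a matching of `G` (each resident gets at most one hospital, each
hospital `h` at most `q⁺(h)` residents) and `M` is feasible (`|M(h)| ≥ q⁻(h)`). -/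
theorem statement1 {R H : Type} [Fintype R] [Fintype H] [DecidableEq R] [DecidableEq H]
    (G : HRLQ R H) (M1 M2 : R → Option H) (rho : H → Option R)
    (hM1 : HRLQ.IsMatching G M1)
    (hM1stab : ∀ r h, ¬ HRLQ.BlocksIn G G.E G.lq M1 r h)
    (hM1full : ∀ h, (HRLQ.assigned M1 h).card = G.lq h)
    (hrho : ∀ h, (HRLQ.assigned M1 h).card < G.uq h → HRLQ.IsThreshold G M1 h (rho h))
    (hM2 : HRLQ.IsMatchingIn (HRLQ.Ered G M1 rho) (HRLQ.qred G) M2)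
    (hM2stab : ∀ r h, ¬ HRLQ.BlocksIn G (HRLQ.Ered G M1 rho) (HRLQ.qred G) M2 r h) :
    HRLQ.IsMatching G (HRLQ.munion M1 M2) ∧
      ∀ h, G.lq h ≤ (HRLQ.assigned (HRLQ.munion M1 M2) h).card := by
  classical
  -- M2 only matches residents unmatched in M1
  have hM2none : ∀ r h, M2 r = some h → M1 r = none := by
    intro r h hr
    have := hM2.1 r h hr
    simp [HRLQ.Ered, Finset.mem_filter] at this
    exact this.2.1
  have hEd : ∀ r h, M2 r = some h → (r, h) ∈ G.E := by
    intro r h hr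
    have := hM2.1 r h hr
    simp [HRLQ.Ered, Finset.mem_filter] at this
    exact this.1
  have hset : ∀ h, HRLQ.assigned (HRLQ.munion M1 M2) h
      = HRLQ.assigned M1 h ∪ HRLQ.assigned M2 h := by
    intro h
    ext r
    simp only [HRLQ.assigned, Finset.mem_filter, Finset.mem_univ, true_and,
      Finset.mem_union]
    simp only [HRLQ.munion]
    cases hM1r : M1 r with
    | none => simp
    | some h' =>
      simp only []
      constructor
      · intro he; left; exact he
      · rintro (he | he)
        · exact he
        · exact absurd (hM2none r h he) (by simp [hM1r])
  have hdisj : ∀ h, Disjoint (HRLQ.assigned M1 h) (HRLQ.assigned M2 h) := by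
    intro h
    rw [Finset.disjoint_left]
    intro r h1 h2
    simp only [HRLQ.assigned, Finset.mem_filter, Finset.mem_univ, true_and] at h1 h2
    rw [hM2none r h h2] at h1; exact nomatch h1
  have hcard : ∀ h, (HRLQ.assigned (HRLQ.munion M1 M2) h).card
      = G.lq h + (HRLQ.assigned M2 h).card := by
    intro h
    rw [hset h, Finset.card_union_of_disjoint (hdisj h), hM1full h]
  refine ⟨⟨?_, ?_⟩, ?_⟩
  · intro r h hr
    simp only [HRLQ.munion] at hr
    cases hM1r : M1 r with
    | none => rw [hM1r] at hr; exact hEd r h hr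
    | some h' =>
      rw [hM1r] at hr
      cases hr
      exact hM1.1 r h hM1r
  · intro h
    rw [hcard h]
    have h2 := hM2.2 h
    simp only [HRLQ.qred] at h2
    have := G.lq_le_uq h
    omega
  · intro h
    rw [hcard h]
    omega
end

section
/- Let G be an HRLQ instance, and suppose M1 is a matching of G that is stable in the instance G1 and satisfies |M1(h)| = q⁻(h) for every hospital h. Let M2 be a stable matching of the instance G' defined from M1. Then M = M1 ∪ M2 is an envy-free matching of G. -/
open scoped Classical

/-- If `M1` is a matching of `G` that is stable in `G1` and fills every
lower quota exactly, and `M2` is a stable matching of the reduced instance `G'`, then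
`M = M1 ∪ M2` is an envy-free matching of `G`. -/
theorem statement2 {R H : Type} [Fintype R] [Fintype H] [DecidableEq R] [DecidableEq H]
    (G : HRLQ R H) (M1 M2 : R → Option H) (rho : H → Option R)
    (hM1 : HRLQ.IsMatching G M1)
    (hM1stab : ∀ r h, ¬ HRLQ.BlocksIn G G.E G.lq M1 r h)
    (hM1full : ∀ h, (HRLQ.assigned M1 h).card = G.lq h)
    (hrho : ∀ h, (HRLQ.assigned M1 h).card < G.uq h → HRLQ.IsThreshold G M1 h (rho h))
    (hM2 : HRLQ.IsMatchingIn (HRLQ.Ered G M1 rho) (HRLQ.qred G) M2)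
    (hM2stab : ∀ r h, ¬ HRLQ.BlocksIn G (HRLQ.Ered G M1 rho) (HRLQ.qred G) M2 r h) :
    HRLQ.IsMatching G (HRLQ.munion M1 M2) ∧ HRLQ.EnvyFree G (HRLQ.munion M1 M2) := by
  have hM2ered : ∀ r h, M2 r = some h → (r, h) ∈ HRLQ.Ered G M1 rho := hM2.1
  have hM2none : ∀ r h, M2 r = some h → M1 r = none := by
    intro r h hr
    have := hM2ered r h hr
    simp only [HRLQ.Ered, Finset.mem_filter] at this
    exact this.2.1
  have hunion : ∀ r h, HRLQ.munion M1 M2 r = some h ↔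
      M1 r = some h ∨ (M1 r = none ∧ M2 r = some h) := by
    intro r h
    unfold HRLQ.munion
    cases hr : M1 r <;> simp [hr]
  constructor
  · constructor
    · intro r h hrh
      rcases (hunion r h).1 hrh with h1 | ⟨_, h2⟩
      · exact hM1.1 r h h1
      · have := hM2ered r h h2
        simp only [HRLQ.Ered, Finset.mem_filter] at this
        exact this.1
    · intro h
      have hsub : HRLQ.assigned (HRLQ.munion M1 M2) h ⊆
          HRLQ.assigned M1 h ∪ HRLQ.assigned M2 h := by
        intro r hr
        simp only [HRLQ.assigned, Finset.mem_filter, Finset.mem_univ, true_and,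
          Finset.mem_union] at hr ⊢
        rcases (hunion r h).1 hr with h1 | ⟨_, h2⟩
        · exact Or.inl h1
        · exact Or.inr h2
      have hdisj : Disjoint (HRLQ.assigned M1 h) (HRLQ.assigned M2 h) := by
        rw [Finset.disjoint_left]
        intro r h1 h2
        simp only [HRLQ.assigned, Finset.mem_filter, Finset.mem_univ, true_and] at h1 h2
        rw [hM2none r h h2] at h1
        exact nomatch h1
      calc (HRLQ.assigned (HRLQ.munion M1 M2) h).card
          ≤ (HRLQ.assigned M1 h ∪ HRLQ.assigned M2 h).card := Finset.card_le_card hsub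
        _ = (HRLQ.assigned M1 h).card + (HRLQ.assigned M2 h).card :=
            Finset.card_union_of_disjoint hdisj
        _ ≤ G.lq h + (G.uq h - G.lq h) :=
            Nat.add_le_add (le_of_eq (hM1full h)) (hM2.2 h)
        _ = G.uq h := Nat.add_sub_cancel' (G.lq_le_uq h)
  · rintro r r' ⟨h, hMr', hEdge, hpr, hwant⟩
    rcases (hunion r' h).1 hMr' with hA | ⟨hr'none, hr'M2⟩
    · -- Case A : r' matched to h already in M1; (r,h) blocks M1 in G1
      refine hM1stab r h ⟨hEdge, ?_, ?_, ?_⟩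
      · intro hM1r
        have : HRLQ.munion M1 M2 r = some h := (hunion r h).2 (Or.inl hM1r)
        exact G.rp_irrefl r h (hwant h this)
      · intro h' hM1r
        exact hwant h' ((hunion r h').2 (Or.inl hM1r))
      · refine Or.inr ⟨r', ?_, hpr⟩
        simp only [HRLQ.assigned, Finset.mem_filter, Finset.mem_univ, true_and]
        exact hA
    · -- Case B : r' matched to h via M2
      have hered := hM2ered r' h hr'M2
      simp only [HRLQ.Ered, Finset.mem_filter] at hered
      obtain ⟨hE', _, hcard, hpref'⟩ := hered
      have hthr := hrho h hcard
      cases hM1r : M1 r with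
      | some h0 =>
        -- r matched in M1: r is a threshold candidate preferred over rho h, contradiction
        have hrp : G.rp r h h0 := hwant h0 ((hunion r h0).2 (Or.inl hM1r))
        have hcand : HRLQ.ThresholdCand G M1 h r := ⟨hEdge, h0, hM1r, hrp⟩
        cases hrho_eq : rho h with
        | none =>
          rw [hrho_eq] at hthr
          exact hthr r hcand
        | some rh =>
          rw [hrho_eq] at hthr
          rw [hrho_eq] at hpref'
          have hrrh : G.hp h r rh := G.hp_trans h r r' rh hpr hpref'
          by_cases hne : r = rh
          · subst hne
            exact G.hp_irrefl h r hrrh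
          · have := G.hp_trans h r rh r hrrh (hthr.2 r hcand hne)
            exact G.hp_irrefl h r this
      | none =>
        -- r unmatched in M1: (r,h) blocks M2 in the reduced instance
        have hmun : HRLQ.munion M1 M2 r = M2 r := by
          unfold HRLQ.munion; rw [hM1r]
        refine hM2stab r h ⟨?_, ?_, ?_, ?_⟩
        · simp only [HRLQ.Ered, Finset.mem_filter]
          refine ⟨hEdge, hM1r, hcard, ?_⟩
          cases hrho_eq : rho h with
          | none => simp [HRLQ.PrefThreshold]
          | some rh =>
            rw [hrho_eq] at hpref'
            exact G.hp_trans h r r' rh hpr hpref'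
        · intro hM2r
          rw [← hmun] at hM2r
          exact G.rp_irrefl r h (hwant h hM2r)
        · intro h' hM2r
          rw [← hmun] at hM2r
          exact hwant h' hM2r
        · refine Or.inr ⟨r', ?_, hpr⟩
          simp only [HRLQ.assigned, Finset.mem_filter, Finset.mem_univ, true_and]
          exact hr'M2
end

section
/- Let G be an HRLQ instance, and suppose M1 is a matching of G that is stable in the instance G1 and satisfies |M1(h)| = q⁻(h) for every hospital h. Let M2 be a stable matching of the instance G' defined from M1, and let M = M1 ∪ M2. Then for every edge (r,h) ∈ E \ M, the set M ∪ {(r,h)} is not an envy-free matching of G: either it violates the matching constraints (r is already matched in M or |M(h)| = q⁺(h)), or some resident has justified envy with respect to M ∪ {(r,h)}. -/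
open scoped Classical

/-- With `M = M1 ∪ M2` as above, for every edge `(r,h) ∈ E \ M`, the set
`M ∪ {(r,h)}` is not an envy-free matching of `G`: either the matching constraints are
violated (`r` already matched in `M`, or `|M(h)| = q⁺(h)`), or some resident has
justified envy with respect to `M ∪ {(r,h)}`. -/
theorem statement3 {R H : Type} [Fintype R] [Fintype H] [DecidableEq R] [DecidableEq H]
    (G : HRLQ R H) (M1 M2 : R → Option H) (rho : H → Option R)
    (hM1 : HRLQ.IsMatching G M1)
    (hM1stab : ∀ r h, ¬ HRLQ.BlocksIn G G.E G.lq M1 r h)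
    (hM1full : ∀ h, (HRLQ.assigned M1 h).card = G.lq h)
    (hrho : ∀ h, (HRLQ.assigned M1 h).card < G.uq h → HRLQ.IsThreshold G M1 h (rho h))
    (hM2 : HRLQ.IsMatchingIn (HRLQ.Ered G M1 rho) (HRLQ.qred G) M2)
    (hM2stab : ∀ r h, ¬ HRLQ.BlocksIn G (HRLQ.Ered G M1 rho) (HRLQ.qred G) M2 r h) :
    ∀ r h, (r, h) ∈ G.E → HRLQ.munion M1 M2 r ≠ some h →
      (HRLQ.munion M1 M2 r ≠ none ∨
        (HRLQ.assigned (HRLQ.munion M1 M2) h).card = G.uq h ∨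
        ∃ r₁ r₂, HRLQ.JustifiedEnvy G
          (Function.update (HRLQ.munion M1 M2) r (some h)) r₁ r₂) := by
  intro r h hE hne
  set M := HRLQ.munion M1 M2 with hMdef
  by_cases h0 : M r = none
  swap
  · exact Or.inl h0
  -- r is unmatched in M1 and M2
  have hM1r : M1 r = none := by
    rcases hm : M1 r with _ | h₀
    · rfl
    · exfalso
      have : M r = some h₀ := by simp [hMdef, HRLQ.munion, hm]
      rw [h0] at this; cases this
  have hM2r : M2 r = none := by
    have : M r = M2 r := by simp [hMdef, HRLQ.munion, hM1r]
    rw [h0] at this; exact this.symm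
  -- residents matched in M2 are unmatched in M1
  have hkey : ∀ r' h', M2 r' = some h' → M1 r' = none := by
    intro r' h' hm
    have := hM2.1 r' h' hm
    simp only [HRLQ.Ered, Finset.mem_filter] at this
    exact this.2.1
  -- assigned M h is the disjoint union of assigned M1 h and assigned M2 h
  have hsplit : HRLQ.assigned M h = HRLQ.assigned M1 h ∪ HRLQ.assigned M2 h := by
    ext r'
    simp only [HRLQ.assigned, Finset.mem_filter, Finset.mem_univ, true_and,
      Finset.mem_union]
    constructor
    · intro hm
      rcases hm1 : M1 r' with _ | h₀
      · right
        have : M r' = M2 r' := by simp [hMdef, HRLQ.munion, hm1]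
        rw [← this]; exact hm
      · left
        have : M r' = some h₀ := by simp [hMdef, HRLQ.munion, hm1]
        rw [this] at hm; rw [← hm]
    · rintro (hm | hm)
      · simp [hMdef, HRLQ.munion, hm]
      · simp [hMdef, HRLQ.munion, hkey r' h hm, hm]
  have hdisj : Disjoint (HRLQ.assigned M1 h) (HRLQ.assigned M2 h) := by
    rw [Finset.disjoint_left]
    intro r' h1 h2
    simp only [HRLQ.assigned, Finset.mem_filter, Finset.mem_univ, true_and] at h1 h2
    rw [hkey r' h h2] at h1; cases h1
  have hcard : (HRLQ.assigned M h).card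
      = G.lq h + (HRLQ.assigned M2 h).card := by
    rw [hsplit, Finset.card_union_of_disjoint hdisj, hM1full h]
  by_cases hfull : (HRLQ.assigned M h).card = G.uq h
  · exact Or.inr (Or.inl hfull)
  -- so |M(h)| < uq h
  have hle : (HRLQ.assigned M h).card ≤ G.uq h := by
    have h2 : (HRLQ.assigned M2 h).card ≤ G.uq h - G.lq h := hM2.2 h
    have h3 := G.lq_le_uq h
    omega
  have hlt : (HRLQ.assigned M h).card < G.uq h := lt_of_le_of_ne hle hfull
  have hM1lt : (HRLQ.assigned M1 h).card < G.uq h := by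
    rw [hM1full h]; omega
  have hM2lt : (HRLQ.assigned M2 h).card < HRLQ.qred G h := by
    have h3 := G.lq_le_uq h
    simp only [HRLQ.qred]; omega
  by_cases hred : (r, h) ∈ HRLQ.Ered G M1 rho
  · -- (r,h) would block M2 in G', contradiction with stability
    exfalso
    apply hM2stab r h
    refine ⟨hred, ?_, ?_, Or.inl hM2lt⟩
    · rw [hM2r]; exact fun hc => by cases hc
    · intro h' hc
      rw [hM2r] at hc; cases hc
  · -- the threshold resident has justified envy toward r
    have hnp : ¬ HRLQ.PrefThreshold G h (rho h) r := by
      intro hp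
      apply hred
      simp only [HRLQ.Ered, Finset.mem_filter]
      exact ⟨hE, hM1r, hM1lt, hp⟩
    rcases hr : rho h with _ | rt
    · exact absurd (by rw [hr]; trivial) hnp
    rw [hr] at hnp
    have hnp' : ¬ G.hp h r rt := hnp
    have hth := hrho h hM1lt
    rw [hr] at hth
    obtain ⟨⟨hrtE, h', hrt1, hrtp⟩, _⟩ := hth
    have hne' : rt ≠ r := by
      intro hc; rw [hc, hM1r] at hrt1; cases hrt1
    have hhp : G.hp h rt r := by
      rcases G.hp_total h rt r hrtE hE hne' with hh | hh
      · exact hh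
      · exact absurd hh hnp'
    refine Or.inr (Or.inr ⟨rt, r, h, ?_, hrtE, hhp, ?_⟩)
    · simp
    · intro h'' hm
      rw [Function.update_of_ne hne'] at hm
      have : M rt = some h' := by simp [hMdef, HRLQ.munion, hrt1]
      rw [this] at hm
      injection hm with hm'
      rw [← hm']; exact hrtp
end

section
/- There exists an HR instance in which every hospital has upper quota 1, together with a stable matching M_s and a popular matching M_p with |M_p| > |M_s|, such that strictly more residents are matched to their rank-1 hospital in M_s than in M_p, and strictly more residents prefer their assignment in M_s over their assignment in M_p than prefer their assignment in M_p over their assignment in M_s. -/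
open scoped Classical

open HRLQ

abbrev rpx (r h h' : Fin 4) : Prop :=
  (r = 0 ∧ h = 0 ∧ h' = 1) ∨ (r = 2 ∧ h = 2 ∧ h' = 3) ∨ (r = 3 ∧ h = 3 ∧ h' = 2)
abbrev hpx (h r r' : Fin 4) : Prop :=
  (h = 0 ∧ r = 0 ∧ r' = 1) ∨ (h = 2 ∧ r = 3 ∧ r' = 2) ∨ (h = 3 ∧ r = 2 ∧ r' = 3)
def Eex : Finset (Fin 4 × Fin 4) := {(0,0),(0,1),(1,0),(2,2),(2,3),(3,2),(3,3)}

def Gex : HRLQ (Fin 4) (Fin 4) where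
  E := Eex
  rp := rpx
  hp := hpx
  lq := fun _ => 0
  uq := fun _ => 1
  lq_le_uq := fun _ => Nat.zero_le _
  uq_pos := fun _ => le_refl 1
  rp_irrefl := by decide
  rp_trans := by decide
  rp_total := fun r h₁ h₂ m₁ m₂ hne => by
    have key : ∀ r h₁ h₂ : Fin 4,
        ¬((r, h₁) ∈ Eex ∧ (r, h₂) ∈ Eex ∧ h₁ ≠ h₂ ∧ ¬(rpx r h₁ h₂ ∨ rpx r h₂ h₁)) := by decide
    by_contra hc
    exact key r h₁ h₂ ⟨m₁, m₂, hne, hc⟩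
  hp_irrefl := by decide
  hp_trans := by decide
  hp_total := fun h r₁ r₂ m₁ m₂ hne => by
    have key : ∀ h r₁ r₂ : Fin 4,
        ¬((r₁, h) ∈ Eex ∧ (r₂, h) ∈ Eex ∧ r₁ ≠ r₂ ∧ ¬(hpx h r₁ r₂ ∨ hpx h r₂ r₁)) := by decide
    by_contra hc
    exact key h r₁ r₂ ⟨m₁, m₂, hne, hc⟩

def Msx : Fin 4 → Option (Fin 4) := ![some 0, none, some 2, some 3]
def Mpx : Fin 4 → Option (Fin 4) := ![some 1, some 0, some 3, some 2]

instance (r h h' : Fin 4) : Decidable (Gex.rp r h h') :=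
  inferInstanceAs (Decidable (rpx r h h'))
instance (h r r' : Fin 4) : Decidable (Gex.hp h r r') :=
  inferInstanceAs (Decidable (hpx h r r'))

lemma matching_Msx : HRLQ.IsMatching Gex Msx := ⟨by decide, by decide⟩
lemma matching_Mpx : HRLQ.IsMatching Gex Mpx := ⟨by decide, by decide⟩
lemma msize_lt : HRLQ.msize Msx < HRLQ.msize Mpx := by decide
lemma stable_Msx : HRLQ.Stable Gex Msx := by
  simp only [HRLQ.Stable, HRLQ.Blocks, HRLQ.BlocksIn, HRLQ.WantsMore]
  decide

lemma ite_irrel {α : Sort*} {p q : Prop} (hpq : p = q) (i : Decidable p) (j : Decidable q)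
    (a b : α) : @ite _ p i a b = @ite _ q j a b := by
  subst hpq; rw [Subsingleton.elim i j]

def rvotex (r : Fin 4) (a b : Option (Fin 4)) : ℤ :=
  if a = b then 0
  else
    match a, b with
    | none, _ => -1
    | _, none => 1
    | some h, some h' => if rpx r h h' then 1 else if rpx r h' h then -1 else 0

lemma rvote_eq (r : Fin 4) (a b : Option (Fin 4)) : HRLQ.rvote Gex r a b = rvotex r a b := by
  unfold HRLQ.rvote rvotex
  by_cases hab : a = b
  · rw [if_pos hab, if_pos hab]
  · rw [if_neg hab, if_neg hab]
    rcases a with _ | h <;> rcases b with _ | h'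
    · rfl
    · rfl
    · rfl
    · exact ite_irrel rfl _ _ _ _ |>.trans (by
        exact congrArg _ (ite_irrel rfl _ _ _ _))
instance instRank1 (M : Fin 4 → Option (Fin 4)) : DecidablePred (HRLQ.Rank1 Gex M) := fun r =>
  decidable_of_iff (∃ h, M r = some h ∧ ∀ h', ¬((r, h') ∈ Gex.E ∧ h' ≠ h ∧ ¬ Gex.rp r h h'))
    (by
      unfold HRLQ.Rank1
      constructor
      · rintro ⟨h, hm, hall⟩
        exact ⟨h, hm, fun h' hmem hne => by_contra fun hrp => hall h' ⟨hmem, hne, hrp⟩⟩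
      · rintro ⟨h, hm, hall⟩
        exact ⟨h, hm, fun h' hc => absurd (hall h' hc.1 hc.2.1) hc.2.2⟩)

instance instPref (M N : Fin 4 → Option (Fin 4)) :
    DecidablePred (fun r => HRLQ.rvote Gex r (M r) (N r) = 1) := fun r =>
  decidable_of_iff (rvotex r (M r) (N r) = 1) (by simp only [rvote_eq])

lemma rank1_lt : HRLQ.rank1Count Gex Mpx < HRLQ.rank1Count Gex Msx := by
  unfold HRLQ.rank1Count
  rw [@Finset.filter_congr_decidable _ _ _ _ (instRank1 Mpx),
      @Finset.filter_congr_decidable _ _ _ _ (instRank1 Msx)]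
  decide

lemma pref_lt : HRLQ.prefCount Gex Mpx Msx < HRLQ.prefCount Gex Msx Mpx := by
  unfold HRLQ.prefCount
  rw [@Finset.filter_congr_decidable _ _ _ _ (instPref Mpx Msx),
      @Finset.filter_congr_decidable _ _ _ _ (instPref Msx Mpx)]
  decide

section Forced
variable {R H : Type} [Fintype R] [Fintype H] [DecidableEq R] [DecidableEq H]

lemma hvote_forced (G : HRLQ R H) (M M' : R → Option H) (h : H) (P : Finset (R × R))
    (hq : G.uq h = 1) (hA : (HRLQ.assigned M h).card ≤ 1)
    (hB : (HRLQ.assigned M' h).card ≤ 1) (hc : HRLQ.IsCorr G M M' h P) :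
    HRLQ.hvote G M M' h P =
      (∑ a ∈ HRLQ.assigned M h \ HRLQ.assigned M' h,
        ∑ b ∈ HRLQ.assigned M' h \ HRLQ.assigned M h,
          if G.hp h a b then (1 : ℤ) else -1)
      + (if HRLQ.assigned M' h \ HRLQ.assigned M h = ∅ then
          ((HRLQ.assigned M h \ HRLQ.assigned M' h).card : ℤ) else 0)
      - (if HRLQ.assigned M h \ HRLQ.assigned M' h = ∅ then
          ((HRLQ.assigned M' h \ HRLQ.assigned M h).card : ℤ) else 0) := by
  obtain ⟨h1, h2, h3⟩ := hc
  have hA1 : (HRLQ.assigned M h \ HRLQ.assigned M' h).card ≤ 1 :=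
    le_trans (Finset.card_le_card Finset.sdiff_subset) hA
  have hB1 : (HRLQ.assigned M' h \ HRLQ.assigned M h).card ≤ 1 :=
    le_trans (Finset.card_le_card Finset.sdiff_subset) hB
  by_cases hAe : HRLQ.assigned M h \ HRLQ.assigned M' h = ∅
  · have hP0 : P = ∅ := by
      refine Finset.eq_empty_of_forall_notMem fun p hp => ?_
      have := (h1 p hp).1
      rw [hAe] at this
      exact absurd this (Finset.notMem_empty _)
    subst hP0
    simp [HRLQ.hvote, hAe, Finset.card_eq_zero.mpr hAe]
  · by_cases hBe : HRLQ.assigned M' h \ HRLQ.assigned M h = ∅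
    · have hP0 : P = ∅ := by
        refine Finset.eq_empty_of_forall_notMem fun p hp => ?_
        have := (h1 p hp).2
        rw [hBe] at this
        exact absurd this (Finset.notMem_empty _)
      subst hP0
      simp [HRLQ.hvote, hAe, hBe, Finset.card_eq_zero.mpr hBe]
    · obtain ⟨a, ha⟩ := Finset.card_eq_one.mp
        (le_antisymm hA1 (Finset.one_le_card.mpr (Finset.nonempty_of_ne_empty hAe)))
      obtain ⟨b, hb⟩ := Finset.card_eq_one.mp
        (le_antisymm hB1 (Finset.one_le_card.mpr (Finset.nonempty_of_ne_empty hBe)))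
      have hPsub : P ⊆ {(a, b)} := by
        intro p hp
        obtain ⟨hp1, hp2⟩ := h1 p hp
        rw [ha, Finset.mem_singleton] at hp1
        rw [hb, Finset.mem_singleton] at hp2
        rw [Finset.mem_singleton]
        exact Prod.ext hp1 hp2
      have hP1 : 1 ≤ P.card := by
        rw [hq, ha, hb] at h3
        simp at h3
        omega
      have hPe : P = {(a, b)} :=
        Finset.eq_of_subset_of_card_le hPsub (by simpa using hP1)
      subst hPe
      rw [ha, hb]
      simp [HRLQ.hvote, ha, hb, hAe, hBe]
end Forced

lemma hpsum_eq (h : Fin 4) (s t : Finset (Fin 4)) :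
    (∑ a ∈ s, ∑ b ∈ t, @ite ℤ (Gex.hp h a b) (Classical.propDecidable _) 1 (-1))
      = ∑ a ∈ s, ∑ b ∈ t, if hpx h a b then (1 : ℤ) else -1 :=
  Finset.sum_congr rfl fun a _ => Finset.sum_congr rfl fun b _ => ite_irrel rfl _ _ _ _

lemma popular_Mpx : HRLQ.Popular Gex Mpx := by
  constructor
  · exact ⟨by decide, by decide⟩
  · intro M' P hM' hP hMore
    have e0 : M' 0 = none ∨ M' 0 = some 0 ∨ M' 0 = some 1 := by
      rcases hv : M' 0 with _ | h
      · exact Or.inl rfl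
      · have hm := hM'.1 0 h hv
        fin_cases h
        · exact Or.inr (Or.inl rfl)
        · exact Or.inr (Or.inr rfl)
        · exact absurd hm (by decide)
        · exact absurd hm (by decide)
    have e1 : M' 1 = none ∨ M' 1 = some 0 := by
      rcases hv : M' 1 with _ | h
      · exact Or.inl rfl
      · have hm := hM'.1 1 h hv
        fin_cases h
        · exact Or.inr rfl
        · exact absurd hm (by decide)
        · exact absurd hm (by decide)
        · exact absurd hm (by decide)
    have e2 : M' 2 = none ∨ M' 2 = some 2 ∨ M' 2 = some 3 := by
      rcases hv : M' 2 with _ | h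
      · exact Or.inl rfl
      · have hm := hM'.1 2 h hv
        fin_cases h
        · exact absurd hm (by decide)
        · exact absurd hm (by decide)
        · exact Or.inr (Or.inl rfl)
        · exact Or.inr (Or.inr rfl)
    have e3 : M' 3 = none ∨ M' 3 = some 2 ∨ M' 3 = some 3 := by
      rcases hv : M' 3 with _ | h
      · exact Or.inl rfl
      · have hm := hM'.1 3 h hv
        fin_cases h
        · exact absurd hm (by decide)
        · exact absurd hm (by decide)
        · exact Or.inr (Or.inl rfl)
        · exact Or.inr (Or.inr rfl)
    have hfun : M' = ![M' 0, M' 1, M' 2, M' 3] := funext fun r => by fin_cases r <;> rfl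
    rcases e0 with hv0 | hv0 | hv0 <;> rcases e1 with hv1 | hv1 <;>
      rcases e2 with hv2 | hv2 | hv2 <;> rcases e3 with hv3 | hv3 | hv3 <;>
    · rw [hv0, hv1, hv2, hv3] at hfun
      have hq0 := hM'.2 0
      have hq2 := hM'.2 2
      have hq3 := hM'.2 3
      rw [hfun] at hq0 hq2 hq3 hMore hP
      first
      | exact absurd hq0 (by decide)
      | exact absurd hq2 (by decide)
      | exact absurd hq3 (by decide)
      | (simp only [HRLQ.MorePopular, HRLQ.totalVote, Fin.sum_univ_four] at hMore
         rw [hvote_forced Gex Mpx _ 0 (P 0) rfl (by decide) (by decide) (hP 0),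
             hvote_forced Gex Mpx _ 1 (P 1) rfl (by decide) (by decide) (hP 1),
             hvote_forced Gex Mpx _ 2 (P 2) rfl (by decide) (by decide) (hP 2),
             hvote_forced Gex Mpx _ 3 (P 3) rfl (by decide) (by decide) (hP 3),
             rvote_eq, rvote_eq, rvote_eq, rvote_eq,
             hpsum_eq, hpsum_eq, hpsum_eq, hpsum_eq] at hMore
         exact absurd hMore (by decide))

/-- There is an HR instance (all lower quotas `0`) in which every
hospital has upper quota `1`, with a stable matching `Ms` and a popular matching `Mp`
such that `|Mp| > |Ms|`, strictly more residents are matched to their rank-1 hospital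
in `Ms` than in `Mp`, and strictly more residents prefer `Ms` over `Mp` than prefer
`Mp` over `Ms`. -/
theorem statement11 :
    ∃ (n m : ℕ) (G : HRLQ (Fin n) (Fin m)) (Ms Mp : Fin n → Option (Fin m)),
      (∀ h, G.lq h = 0) ∧ (∀ h, G.uq h = 1) ∧
      HRLQ.IsMatching G Ms ∧ HRLQ.Stable G Ms ∧
      HRLQ.Popular G Mp ∧
      HRLQ.msize Ms < HRLQ.msize Mp ∧
      HRLQ.rank1Count G Mp < HRLQ.rank1Count G Ms ∧
      HRLQ.prefCount G Mp Ms < HRLQ.prefCount G Ms Mp := by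
  exact ⟨4, 4, Gex, Msx, Mpx, fun _ => rfl, fun _ => rfl, matching_Msx, stable_Msx,
    popular_Mpx, msize_lt, rank1_lt, pref_lt⟩
end

section
/- There exists an HR instance in which every hospital has upper quota 1, together with a stable matching M_s and a popular matching M_p with |M_p| > |M_s|, such that strictly more residents are matched to their rank-1 hospital in M_p than in M_s, and strictly more residents prefer their assignment in M_p over their assignment in M_s than prefer their assignment in M_s over their assignment in M_p. -/
open scoped Classical

-- Auxiliary development for statement12

/-- Edge set of our concrete instance. -/
def S12.E0 : Finset (Fin 4 × Fin 4) :=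
  {(0,0),(0,1),(1,0),(2,2),(2,3),(3,2),(3,3)}

/-- Resident preference triples `(r,h,h')` : `r` prefers `h` to `h'`. -/
def S12.rpl : List (Fin 4 × Fin 4 × Fin 4) := [(0,0,1),(2,2,3),(3,3,2)]

/-- Hospital preference triples `(h,r,r')` : `h` prefers `r` to `r'`. -/
def S12.hpl : List (Fin 4 × Fin 4 × Fin 4) := [(0,0,1),(2,3,2),(3,2,3)]

noncomputable def S12.G : HRLQ (Fin 4) (Fin 4) where
  E := S12.E0
  rp := fun r h h' => (r,h,h') ∈ S12.rpl
  hp := fun h r r' => (h,r,r') ∈ S12.hpl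
  lq := fun _ => 0
  uq := fun _ => 1
  lq_le_uq := by decide
  uq_pos := by decide
  rp_irrefl := by decide
  rp_trans := by
    intro r a b c h1 h2; fin_cases r <;> fin_cases a <;> fin_cases b <;> fin_cases c <;> simp_all [S12.rpl]
  rp_total := by decide
  hp_irrefl := by decide
  hp_trans := by
    intro r a b c h1 h2; fin_cases r <;> fin_cases a <;> fin_cases b <;> fin_cases c <;> simp_all [S12.hpl]
  hp_total := by decide

def S12.Ms : Fin 4 → Option (Fin 4) := ![some 0, none, some 3, some 2]
def S12.Mp : Fin 4 → Option (Fin 4) := ![some 1, some 0, some 2, some 3]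

namespace S12

lemma gE : G.E = E0 := rfl
lemma grp : G.rp = fun r h h' => (r,h,h') ∈ rpl := rfl
lemma ghp : G.hp = fun h r r' => (h,r,r') ∈ hpl := rfl
lemma guq : G.uq = fun _ => 1 := rfl

/-- Computable version of `assigned`. -/
def assignedC (M : Fin 4 → Option (Fin 4)) (h : Fin 4) : Finset (Fin 4) :=
  Finset.univ.filter fun r => M r = some h

lemma assignedC_eq (M : Fin 4 → Option (Fin 4)) (h : Fin 4) :
    HRLQ.assigned M h = assignedC M h := by
  ext r; simp [HRLQ.assigned, assignedC, Finset.mem_filter]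

/-- Computable version of `rvote` for our instance. -/
def rvoteC (r : Fin 4) (a b : Option (Fin 4)) : ℤ :=
  if a = b then 0
  else
    match a, b with
    | none, _ => -1
    | _, none => 1
    | some h, some h' =>
        if (r,h,h') ∈ rpl then 1 else if (r,h',h) ∈ rpl then -1 else 0

lemma rvote_eq (r : Fin 4) (a b : Option (Fin 4)) :
    HRLQ.rvote G r a b = rvoteC r a b := by
  unfold HRLQ.rvote rvoteC
  rcases a with _ | h <;> rcases b with _ | h' <;>
    simp only [] <;> split_ifs <;> first | rfl | simp_all [grp]

/-- Deterministic value of a hospital's vote (valid for quota-1 instances). -/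
def hdetC (M M' : Fin 4 → Option (Fin 4)) (h : Fin 4) : ℤ :=
  if assignedC M h \ assignedC M' h = ∅ then
    -(((assignedC M' h \ assignedC M h).card : ℕ) : ℤ)
  else if assignedC M' h \ assignedC M h = ∅ then
    ((assignedC M h \ assignedC M' h).card : ℤ)
  else
    ∑ a ∈ assignedC M h \ assignedC M' h, ∑ b ∈ assignedC M' h \ assignedC M h,
      (if (h,a,b) ∈ hpl then (1:ℤ) else -1)

lemma hvote_eq (M M' : Fin 4 → Option (Fin 4)) (h : Fin 4)
    (hM : (assignedC M h).card ≤ 1) (hM' : (assignedC M' h).card ≤ 1)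
    (P : Finset (Fin 4 × Fin 4)) (hc : HRLQ.IsCorr G M M' h P) :
    HRLQ.hvote G M M' h P = hdetC M M' h := by
  obtain ⟨h1, h2, h3⟩ := hc
  simp only [assignedC_eq] at h1 h3 ⊢
  unfold HRLQ.hvote hdetC
  simp only [assignedC_eq]
  by_cases hA : assignedC M h \ assignedC M' h = ∅
  · have hP : P = ∅ := Finset.eq_empty_of_forall_notMem fun p hp => by
      have := (h1 p hp).1; rw [hA] at this; simp at this
    simp [hA, hP]
  · by_cases hB : assignedC M' h \ assignedC M h = ∅
    · have hP : P = ∅ := Finset.eq_empty_of_forall_notMem fun p hp => by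
        have := (h1 p hp).2; rw [hB] at this; simp at this
      simp [hA, hB, hP]
    · have hAc : (assignedC M h \ assignedC M' h).card = 1 := by
        have h0 : 0 < (assignedC M h \ assignedC M' h).card :=
          Finset.card_pos.mpr (Finset.nonempty_of_ne_empty hA)
        have hle : (assignedC M h \ assignedC M' h).card ≤ 1 :=
          le_trans (Finset.card_le_card Finset.sdiff_subset) hM
        omega
      have hBc : (assignedC M' h \ assignedC M h).card = 1 := by
        have h0 : 0 < (assignedC M' h \ assignedC M h).card :=
          Finset.card_pos.mpr (Finset.nonempty_of_ne_empty hB)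
        have hle : (assignedC M' h \ assignedC M h).card ≤ 1 :=
          le_trans (Finset.card_le_card Finset.sdiff_subset) hM'
        omega
      obtain ⟨a, ha⟩ := Finset.card_eq_one.mp hAc
      obtain ⟨b, hb⟩ := Finset.card_eq_one.mp hBc
      have hPcard : 1 ≤ P.card := by
        have := h3
        rw [ha, hb] at this
        simp only [Finset.card_singleton, guq] at this
        omega
      have hPsub : P ⊆ {(a,b)} := by
        intro p hp
        obtain ⟨hp1, hp2⟩ := h1 p hp
        rw [ha] at hp1; rw [hb] at hp2
        simp only [Finset.mem_singleton] at hp1 hp2 ⊢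
        exact Prod.ext hp1 hp2
      have hP : P = {(a,b)} :=
        Finset.eq_of_subset_of_card_le hPsub (by simpa using hPcard)
      rw [if_neg hA, if_neg hB, hP, ha, hb]
      simp [ghp, hAc, hBc, ha, hb]

lemma matching_Ms : HRLQ.IsMatching G Ms := by
  constructor
  · intro r h hrh
    rw [gE]
    revert hrh; revert r h
    decide
  · intro h
    rw [assignedC_eq, guq]
    revert h; decide

lemma matching_Mp : HRLQ.IsMatching G Mp := by
  constructor
  · intro r h hrh
    rw [gE]
    revert hrh; revert r h
    decide
  · intro h
    rw [assignedC_eq, guq]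
    revert h; decide

lemma stable_aux : ∀ r h : Fin 4, ¬ ((r,h) ∈ E0 ∧ Ms r ≠ some h ∧
    (∀ h', Ms r = some h' → (r,h,h') ∈ rpl) ∧
    ((assignedC Ms h).card < 1 ∨ ∃ r' ∈ assignedC Ms h, (h,r,r') ∈ hpl)) := by
  intro r h; fin_cases r <;> fin_cases h <;> simp [E0, Ms, rpl, hpl, assignedC] <;> decide

lemma stable_Ms : HRLQ.Stable G Ms := by
  intro r h hb
  obtain ⟨he, hne, hw, hq⟩ := hb
  rw [gE] at he
  rw [assignedC_eq, guq] at hq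
  have hw' : ∀ h', Ms r = some h' → (r,h,h') ∈ rpl := hw
  have hq' : (assignedC Ms h).card < 1 ∨ ∃ r' ∈ assignedC Ms h, (h,r,r') ∈ hpl := hq
  exact stable_aux r h ⟨he, hne, hw', hq'⟩

set_option maxRecDepth 100000 in
lemma master : ∀ M' : Fin 4 → Option (Fin 4),
    (∀ r h, M' r = some h → (r,h) ∈ E0) →
    (∀ h, (assignedC M' h).card ≤ 1) →
    0 ≤ (∑ r, rvoteC r (Mp r) (M' r)) + ∑ h, hdetC Mp M' h := by
  decide

lemma popular_Mp : HRLQ.Popular G Mp := by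
  refine ⟨matching_Mp, ?_⟩
  intro M' P hM' hP hpop
  have hmatch : ∀ r h, M' r = some h → (r,h) ∈ E0 := fun r h hrh => by
    have := hM'.1 r h hrh; rwa [gE] at this
  have hquota : ∀ h, (assignedC M' h).card ≤ 1 := fun h => by
    have := hM'.2 h; rwa [assignedC_eq, guq] at this
  have hMpq : ∀ h, (assignedC Mp h).card ≤ 1 := by decide
  have hv : ∀ h, HRLQ.hvote G Mp M' h (P h) = hdetC Mp M' h := fun h =>
    hvote_eq Mp M' h (hMpq h) (hquota h) (P h) (hP h)
  have hr : (∑ r, HRLQ.rvote G r (Mp r) (M' r)) = ∑ r, rvoteC r (Mp r) (M' r) :=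
    Finset.sum_congr rfl fun r _ => rvote_eq r (Mp r) (M' r)
  have htot : HRLQ.totalVote G Mp M' P
      = (∑ r, rvoteC r (Mp r) (M' r)) + ∑ h, hdetC Mp M' h := by
    unfold HRLQ.totalVote
    rw [hr]
    congr 1
    exact Finset.sum_congr rfl fun h _ => hv h
  have hm := master M' hmatch hquota
  have hpop' : HRLQ.totalVote G Mp M' P < 0 := hpop
  rw [htot] at hpop'
  omega

lemma msize_lt : HRLQ.msize Ms < HRLQ.msize Mp := by
  unfold HRLQ.msize
  have h1 : (Finset.univ.filter fun r => Ms r ≠ none) = ({0,2,3} : Finset (Fin 4)) := by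
    ext r; simp only [Finset.mem_filter, Finset.mem_univ, true_and]
    fin_cases r <;> simp [Ms]
  have h2 : (Finset.univ.filter fun r => Mp r ≠ none) = (Finset.univ : Finset (Fin 4)) := by
    ext r; simp only [Finset.mem_filter, Finset.mem_univ, true_and]
    fin_cases r <;> simp [Mp]
  rw [h1, h2]; decide

/-- Computable rank-1 predicate. -/
def rank1C (M : Fin 4 → Option (Fin 4)) (r : Fin 4) : Prop :=
  ∃ h, M r = some h ∧ ∀ h', (r,h') ∈ E0 → h' ≠ h → (r,h,h') ∈ rpl

instance : ∀ M r, Decidable (rank1C M r) := fun M r => by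
  unfold rank1C; infer_instance

lemma rank1_iff (M : Fin 4 → Option (Fin 4)) (r : Fin 4) :
    HRLQ.Rank1 G M r ↔ rank1C M r := Iff.rfl

lemma rank1_lt : HRLQ.rank1Count G Ms < HRLQ.rank1Count G Mp := by
  unfold HRLQ.rank1Count
  have h1 : (Finset.univ.filter fun r => HRLQ.Rank1 G Ms r)
      = (Finset.univ.filter fun r => rank1C Ms r) := by
    ext r; simp only [Finset.mem_filter, rank1_iff]
  have h2 : (Finset.univ.filter fun r => HRLQ.Rank1 G Mp r)
      = (Finset.univ.filter fun r => rank1C Mp r) := by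
    ext r; simp only [Finset.mem_filter, rank1_iff]
  rw [h1, h2]; decide

lemma pref_lt : HRLQ.prefCount G Ms Mp < HRLQ.prefCount G Mp Ms := by
  unfold HRLQ.prefCount
  have h1 : (Finset.univ.filter fun r => HRLQ.rvote G r (Ms r) (Mp r) = 1)
      = (Finset.univ.filter fun r => rvoteC r (Ms r) (Mp r) = 1) := by
    ext r; simp only [Finset.mem_filter, rvote_eq]
  have h2 : (Finset.univ.filter fun r => HRLQ.rvote G r (Mp r) (Ms r) = 1)
      = (Finset.univ.filter fun r => rvoteC r (Mp r) (Ms r) = 1) := by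
    ext r; simp only [Finset.mem_filter, rvote_eq]
  rw [h1, h2]; decide

end S12
/-- There is an HR instance (all lower quotas `0`) in which every
hospital has upper quota `1`, with a stable matching `Ms` and a popular matching `Mp`
such that `|Mp| > |Ms|`, strictly more residents are matched to their rank-1 hospital
in `Mp` than in `Ms`, and strictly more residents prefer `Mp` over `Ms` than prefer
`Ms` over `Mp`. -/
theorem statement12 :
    ∃ (n m : ℕ) (G : HRLQ (Fin n) (Fin m)) (Ms Mp : Fin n → Option (Fin m)),
      (∀ h, G.lq h = 0) ∧ (∀ h, G.uq h = 1) ∧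
      HRLQ.IsMatching G Ms ∧ HRLQ.Stable G Ms ∧
      HRLQ.Popular G Mp ∧
      HRLQ.msize Ms < HRLQ.msize Mp ∧
      HRLQ.rank1Count G Ms < HRLQ.rank1Count G Mp ∧
      HRLQ.prefCount G Ms Mp < HRLQ.prefCount G Mp Ms := by
  exact ⟨4, 4, S12.G, S12.Ms, S12.Mp, fun _ => rfl, fun _ => rfl,
    S12.matching_Ms, S12.stable_Ms, S12.popular_Mp,
    S12.msize_lt, S12.rank1_lt, S12.pref_lt⟩
end
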